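/- (Correctness of suffix-array q-gram counting) Let T be a nonempty string over a linearly ordered alphabet and let q ≥ 1. Let s_1 < s_2 < … < s_{|T|} be the |T| suffixes T[j:|T|] (1 ≤ j ≤ |T|) of T listed in increasing lexicographic order (the suffixes are pairwise distinct since they have pairwise distinct lengths). Then the number of distinct length-q substrings of T equals the number of indices i such that |s_i| ≥ q and either i = 1 or the longest common prefix of s_{i−1} and s_i has length less than q. -/

import Mathlib

/-- The substring `S[u:v]` (1-indexed, inclusive; empty if `v < u`). -/
def substr {α : Type*} (S : List α) (u v : ℕ) : List α := (S.drop (u - 1)).take (v + 1 - u)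

/-- `pre(S,q) = S[1:min(q,|S|)]`, the length-`q` prefix of `S`. -/
def pre {α : Type*} (S : List α) (q : ℕ) : List α := S.take q

/-- `suf(S,q) = S[max(1,|S|-q+1):|S|]`, the length-`q` suffix of `S`. -/
def suf {α : Type*} (S : List α) (q : ℕ) : List α := S.drop (S.length - q)

/-- `Occ(T,P) = {k ≥ 1 : T[k:k+|P|-1] = P}`. -/
def Occ {α : Type*} (T P : List α) : Set ℕ := {k | 1 ≤ k ∧ substr T k (k + P.length - 1) = P}

/-- A straight-line program of size `n`: each variable `X_i` (0-indexed here) is either a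
terminal `a ∈ Σ` or a concatenation `X_ℓ X_r` with `ℓ, r < i`. -/
structure SLP (α : Type*) (n : ℕ) where
  rule : Fin n → α ⊕ (Fin n × Fin n)
  wf : ∀ i l r, rule i = Sum.inr (l, r) → l < i ∧ r < i

namespace SLP

variable {α : Type*} {n : ℕ}

/-- The string `val(X_i)` derived by variable `X_i`. -/
def val (S : SLP α n) : Fin n → List α
  | i =>
    match h : S.rule i with
    | Sum.inl a => [a]
    | Sum.inr (l, r) => S.val l ++ S.val r
termination_by i => i.val
decreasing_by
  · exact (S.wf i l r h).1
  · exact (S.wf i l r h).2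

/-- The set `itv(X_i)` of occurrence intervals of `X_i` in the derivation of `T = val(X_n)`. -/
def itv (S : SLP α n) : Fin n → Set (ℕ × ℕ)
  | i =>
    if i.val = n - 1 then {(1, (S.val i).length)}
    else
      {p | ∃ k l, ∃ h : S.rule k = Sum.inr (l, i),
          ∃ uv ∈ S.itv k, p = (uv.1 + (S.val l).length, uv.2)} ∪
      {p | ∃ k r, ∃ h : S.rule k = Sum.inr (i, r),
          ∃ uv ∈ S.itv k, p = (uv.1, uv.1 + (S.val i).length - 1)}
termination_by i => n - i.val
decreasing_by
  · have h1 : (i : ℕ) < (k : ℕ) := (S.wf k l i h).2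
    have h2 : (k : ℕ) < n := k.isLt
    omega
  · have h1 : (i : ℕ) < (k : ℕ) := (S.wf k i r h).1
    have h2 : (k : ℕ) < n := k.isLt
    omega

/-- `vOcc(X_i) = |itv(X_i)|`. -/
noncomputable def vOcc (S : SLP α n) (i : Fin n) : ℕ := (S.itv i).ncard

end SLP

/-- `ℓ(s,t)`: the length of the longest common prefix of `s` and `t`. -/
def lcpLength {α : Type*} [DecidableEq α] : List α → List α → ℕ
  | a :: s, b :: t => if a = b then lcpLength s t + 1 else 0
  | _, _ => 0


section aux
variable {α : Type*} [LinearOrder α]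

lemma lt_is_lex {s t : List α} (h : s < t) : List.Lex (· < ·) s t := h

lemma lex_take (q : ℕ) {s t : List α} (h : List.Lex (· < ·) s t) :
    s.take q = t.take q ∨ List.Lex (· < ·) (s.take q) (t.take q) := by
  induction h generalizing q with
  | nil =>
    cases q with
    | zero => exact Or.inl rfl
    | succ q => exact Or.inr List.Lex.nil
  | @cons a l1 l2 h ih =>
    cases q with
    | zero => exact Or.inl rfl
    | succ q =>
      rcases ih q with h' | h'
      · exact Or.inl (by simp [h'])
      · exact Or.inr (List.Lex.cons h')
  | @rel a l1 b l2 hab =>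
    cases q with
    | zero => exact Or.inl rfl
    | succ q => exact Or.inr (List.Lex.rel hab)

lemma take_le_take (q : ℕ) {s t : List α} (h : s ≤ t) : s.take q ≤ t.take q := by
  rcases h.lt_or_eq with h | rfl
  · rcases lex_take q (lt_is_lex h) with h' | h'
    · exact le_of_eq h'
    · exact le_of_lt h'
  · exact le_rfl

lemma lcpLength_le_length : ∀ s t : List α, lcpLength s t ≤ s.length
  | a :: s, b :: t => by
    by_cases hab : a = b <;> simp [lcpLength, hab]
    exact lcpLength_le_length s t
  | [], t => by simp [lcpLength]
  | a :: s, [] => by simp [lcpLength]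

lemma take_eq_of_le_lcp : ∀ (q : ℕ) (s t : List α), q ≤ lcpLength s t → s.take q = t.take q
  | 0, _, _, _ => by simp
  | q + 1, a :: s, b :: t, h => by
    by_cases hab : a = b
    · subst hab
      have h' : q ≤ lcpLength s t := by simp [lcpLength] at h; omega
      simp [List.take_succ_cons, take_eq_of_le_lcp q s t h']
    · simp [lcpLength, hab] at h
  | q + 1, [], t, h => by simp [lcpLength] at h
  | q + 1, a :: s, [], h => by simp [lcpLength] at h

lemma le_lcp_of_take_eq : ∀ (q : ℕ) (s t : List α), q ≤ t.length → s.take q = t.take q →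
    q ≤ lcpLength s t
  | 0, _, _, _, _ => Nat.zero_le _
  | q + 1, s, b :: t, hlen, heq => by
    cases s with
    | nil => simp at heq
    | cons a s =>
      simp only [List.take_succ_cons, List.cons.injEq] at heq
      obtain ⟨rfl, h2⟩ := heq
      have := le_lcp_of_take_eq q s t (by simpa using Nat.succ_le_succ_iff.mp hlen) h2
      simp [lcpLength]; omega
  | q + 1, s, [], hlen, _ => by simp at hlen

end aux

/-- correctness of suffix-array q-gram counting: let `T` be nonempty,
`q ≥ 1`, and let `e` enumerate the `|T|` (pairwise distinct) nonempty suffixes of `T`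
in increasing lexicographic order, i.e. `e` is a bijection on `Fin |T|` and
`i < j → T.drop (e i) < T.drop (e j)`.  Then the number of distinct length-`q` substrings
of `T` equals the number of indices `i` such that the `i`-th sorted suffix has length `≥ q`
and either `i` is the first index or the longest common prefix of the `(i-1)`-st and `i`-th
sorted suffixes has length `< q`. -/
theorem suffix_array_qgram_count {α : Type*} [LinearOrder α]
    (T : List α) (hT : T ≠ []) (q : ℕ) (hq : 1 ≤ q)
    (e : Fin T.length → Fin T.length) (he : Function.Bijective e)
    (hsorted : ∀ i j : Fin T.length, i < j → T.drop (e i) < T.drop (e j)) :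
    {P : List α | ∃ k, 1 ≤ k ∧ k + q - 1 ≤ T.length ∧ substr T k (k + q - 1) = P}.ncard =
      (Finset.univ.filter (fun i : Fin T.length =>
        q ≤ (T.drop (e i)).length ∧
          ((i : ℕ) = 0 ∨
            lcpLength (T.drop (e ⟨(i : ℕ) - 1, lt_of_le_of_lt (Nat.sub_le _ _) i.isLt⟩))
              (T.drop (e i)) < q))).card := by
  classical
  set f : Fin T.length → List α := fun i => (T.drop (e i)).take q with hf
  set A : Finset (Fin T.length) :=
    Finset.univ.filter (fun i : Fin T.length => q ≤ (T.drop (e i)).length) with hA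
  have hmono : ∀ i j : Fin T.length, i ≤ j → f i ≤ f j := by
    intro i j hij
    rcases eq_or_lt_of_le hij with rfl | h
    · exact le_rfl
    · exact take_le_take q (le_of_lt (hsorted i j h))
  -- predicate of the RHS filter
  set P : Fin T.length → Prop := fun i =>
    q ≤ (T.drop (e i)).length ∧
      ((i : ℕ) = 0 ∨
        lcpLength (T.drop (e ⟨(i : ℕ) - 1, lt_of_le_of_lt (Nat.sub_le _ _) i.isLt⟩))
          (T.drop (e i)) < q) with hP
  set F : Finset (Fin T.length) := Finset.univ.filter P with hFdef
  -- injectivity of f on F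
  have hinj : Set.InjOn f F := by
    have key : ∀ i j : Fin T.length, i < j → j ∈ F → f i ≠ f j := by
      intro i j hij hjF hfeq
      have hj : P j := (Finset.mem_filter.mp hjF).2
      have hj0 : (j : ℕ) ≠ 0 := by
        have := hij
        omega
      have hlcp : lcpLength
          (T.drop (e ⟨(j : ℕ) - 1, lt_of_le_of_lt (Nat.sub_le _ _) j.isLt⟩))
          (T.drop (e j)) < q := by
        rcases hj.2 with h0 | h
        · exact absurd h0 hj0
        · exact h
      set j' : Fin T.length := ⟨(j : ℕ) - 1, lt_of_le_of_lt (Nat.sub_le _ _) j.isLt⟩ with hj'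
      have h1 : f i ≤ f j' := hmono i j' (by rw [Fin.le_def]; simp only [hj']; omega)
      have h2 : f j' ≤ f j := hmono j' j (by rw [Fin.le_def]; simp only [hj']; omega)
      have heq : f j' = f j := le_antisymm h2 (hfeq ▸ h1)
      have : q ≤ lcpLength (T.drop (e j')) (T.drop (e j)) :=
        le_lcp_of_take_eq q _ _ hj.1 heq
      omega
    intro i hi j hj hfeq
    rcases lt_trichotomy i j with h | h | h
    · exact absurd hfeq (key i j h (by simpa using hj))
    · exact h
    · exact absurd hfeq.symm (key j i h (by simpa using hi))
  -- every i in A has a representative in F with the same f-value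
  have reach : ∀ n (i : Fin T.length), (i : ℕ) = n → q ≤ (T.drop (e i)).length →
      ∃ j ∈ F, f j = f i := by
    intro n
    induction n using Nat.strong_induction_on with
    | _ n ih =>
      intro i hin hlen
      by_cases hc : P i
      · exact ⟨i, Finset.mem_filter.mpr ⟨Finset.mem_univ _, hc⟩, rfl⟩
      · simp only [hP] at hc
        push_neg at hc
        obtain ⟨h0, hlcp⟩ := hc hlen
        set i' : Fin T.length := ⟨(i : ℕ) - 1, lt_of_le_of_lt (Nat.sub_le _ _) i.isLt⟩ with hi'
        have hlen' : q ≤ (T.drop (e i')).length :=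
          le_trans hlcp (lcpLength_le_length _ _)
        have hfeq : f i' = f i := take_eq_of_le_lcp q _ _ hlcp
        obtain ⟨j, hjF, hjf⟩ := ih ((i : ℕ) - 1) (by omega) i' rfl hlen'
        exact ⟨j, hjF, hjf.trans hfeq⟩
  have hFA : F ⊆ A := by
    intro i hi
    exact Finset.mem_filter.mpr ⟨Finset.mem_univ _, (Finset.mem_filter.mp hi).2.1⟩
  have himg : F.image f = A.image f := by
    apply Finset.Subset.antisymm (Finset.image_subset_image hFA)
    intro Pv hPv
    obtain ⟨i, hiA, rfl⟩ := Finset.mem_image.mp hPv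
    obtain ⟨j, hjF, hjf⟩ := reach (i : ℕ) i rfl (Finset.mem_filter.mp hiA).2
    exact Finset.mem_image.mpr ⟨j, hjF, hjf⟩
  -- the set of q-grams is the image of A under f
  have hS : {Pv : List α | ∃ k, 1 ≤ k ∧ k + q - 1 ≤ T.length ∧ substr T k (k + q - 1) = Pv}
      = ↑(A.image f) := by
    ext Pv
    simp only [Set.mem_setOf_eq, Finset.coe_image, Set.mem_image, Finset.mem_coe,
      Finset.mem_filter, Finset.mem_univ, true_and, hA]
    constructor
    · rintro ⟨k, hk1, hk2, rfl⟩
      have hkT : k - 1 < T.length := by omega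
      obtain ⟨i, hi⟩ := he.2 ⟨k - 1, hkT⟩
      refine ⟨i, ?_, ?_⟩
      · rw [hi]
        simp only [List.length_drop]
        omega
      · rw [hf]
        simp only [hi]
        show (T.drop (k - 1)).take q = substr T k (k + q - 1)
        rw [substr]
        congr 1
        omega
    · rintro ⟨i, hlen, rfl⟩
      have hel : (T.drop (e i)).length = T.length - (e i : ℕ) := List.length_drop
      refine ⟨(e i : ℕ) + 1, by omega, by omega, ?_⟩
      rw [substr, hf]
      simp only [Nat.add_sub_cancel]
      congr 1
      omega
  rw [hS, Set.ncard_coe_finset, ← himg, Finset.card_image_of_injOn hinj]
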